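/- Let φ(t) := (2/π) K(1/cosh(t/2)) / (1 + e^{-t}) - θ(t), where K is the complete elliptic integral of the first kind and θ is the Heaviside step function. Then φ(t) > 0 for all t ≠ 0 and φ(t) decays exponentially as t → ±∞, i.e. there exist C, c > 0 with φ(t) ≤ C e^{-c|t|} for all |t| ≥ 1. -/

import Mathlib

open Real MeasureTheory

/-- The complete elliptic integral of the first kind. -/
noncomputable def ellipticK (k : ℝ) : ℝ :=
  ∫ θ in (0 : ℝ)..(π / 2), 1 / Real.sqrt (1 - k ^ 2 * Real.sin θ ^ 2)

/-- The kernel `φ(t) = (2/π) K(1/cosh(t/2))/(1+e^{-t}) - θ(t)`. -/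
noncomputable def kernelPhi (t : ℝ) : ℝ :=
  (2 / π) * ellipticK (1 / Real.cosh (t / 2)) / (1 + Real.exp (-t))
    - (if 0 ≤ t then 1 else 0)

section Aux
open Set

lemma denom_pos {k : ℝ} (hk : k ^ 2 < 1) (θ : ℝ) : 0 < 1 - k ^ 2 * Real.sin θ ^ 2 := by
  nlinarith [Real.sin_sq_le_one θ, sq_nonneg k, sq_nonneg (Real.sin θ)]

lemma integrand_cont {k : ℝ} (hk : k ^ 2 < 1) :
    Continuous (fun θ : ℝ => 1 / Real.sqrt (1 - k ^ 2 * Real.sin θ ^ 2)) := by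
  apply Continuous.div continuous_const
  · exact (continuous_const.sub (continuous_const.mul ((Real.continuous_sin).pow 2))).sqrt
  · intro θ
    exact ne_of_gt (Real.sqrt_pos.mpr (denom_pos hk θ))

lemma ellipticK_lower {k : ℝ} (hk : k ^ 2 < 1) : π / 2 ≤ ellipticK k := by
  have h : (π/2 : ℝ) = ∫ _ in (0:ℝ)..(π/2), (1:ℝ) := by simp
  rw [h, ellipticK]
  apply intervalIntegral.integral_mono_on (by positivity)
  · exact intervalIntegrable_const
  · exact ((integrand_cont hk).intervalIntegrable 0 (π/2))
  · intro θ _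
    rw [le_div_iff₀ (Real.sqrt_pos.mpr (denom_pos hk θ)), one_mul]
    apply Real.sqrt_le_one.mpr
    nlinarith [sq_nonneg k, sq_nonneg (Real.sin θ)]

lemma ellipticK_upper {k : ℝ} (hk : k ^ 2 < 1) :
    ellipticK k ≤ (π / 2) * (1 / Real.sqrt (1 - k ^ 2)) := by
  have h : (π/2) * (1 / Real.sqrt (1 - k^2)) = ∫ _ in (0:ℝ)..(π/2), 1 / Real.sqrt (1 - k^2) := by
    simp [mul_comm]
  rw [h, ellipticK]
  apply intervalIntegral.integral_mono_on (by positivity)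
  · exact ((integrand_cont hk).intervalIntegrable 0 (π/2))
  · exact intervalIntegrable_const
  · intro θ _
    have h1 : 0 < 1 - k ^ 2 * Real.sin θ ^ 2 := denom_pos hk θ
    have h2 : (0:ℝ) < 1 - k^2 := by nlinarith
    apply one_div_le_one_div_of_le (Real.sqrt_pos.mpr h2)
    apply Real.sqrt_le_sqrt
    nlinarith [Real.sin_sq_le_one θ, sq_nonneg k]


lemma tan_image : (fun θ : ℝ => Real.tan θ) '' (Ioo 0 (π/2)) = Ioi 0 := by
  ext y
  constructor
  · rintro ⟨θ, ⟨h1, h2⟩, rfl⟩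
    exact Real.tan_pos_of_pos_of_lt_pi_div_two h1 h2
  · intro hy
    exact ⟨Real.arctan y, ⟨by simpa using Real.arctan_strictMono hy, Real.arctan_lt_pi_div_two y⟩, Real.tan_arctan y⟩

lemma bt_image {b : ℝ} (hb : 0 < b) :
    (fun θ : ℝ => b * Real.tan θ) '' (Ioo 0 (π/2)) = Ioi 0 := by
  have : (fun θ : ℝ => b * Real.tan θ) = (fun y => b * y) ∘ (fun θ => Real.tan θ) := rfl
  rw [this, image_comp, tan_image]
  ext y
  simp only [mem_image, mem_Ioi]
  constructor
  · rintro ⟨x, hx, rfl⟩; positivity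
  · intro hy; exact ⟨y / b, by positivity, by field_simp⟩

lemma bt_injOn {b : ℝ} (hb : 0 < b) :
    InjOn (fun θ : ℝ => b * Real.tan θ) (Ioo 0 (π/2)) := by
  intro x hx y hy hxy
  have hsub : Ioo 0 (π/2) ⊆ Ioo (-(π/2)) (π/2) := by
    apply Ioo_subset_Ioo _ le_rfl
    linarith [Real.pi_pos]
  have := Real.injOn_tan (hsub hx) (hsub hy) ?_
  · exact this
  · exact mul_left_cancel₀ hb.ne' hxy

lemma ellipticK_eq_integral_Ioi {k : ℝ} (hk0 : 0 < k) (hk1 : k < 1) :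
    ellipticK k = ∫ x in Ioi (0:ℝ), 1 / Real.sqrt ((x^2+1)*(x^2+(1-k^2))) := by
  have hk2 : k ^ 2 < 1 := by nlinarith
  have hb2pos : (0:ℝ) < 1 - k^2 := by nlinarith
  set b := Real.sqrt (1 - k^2) with hbdef
  have hb : 0 < b := Real.sqrt_pos.mpr hb2pos
  have hb2 : b^2 = 1 - k^2 := Real.sq_sqrt hb2pos.le
  rw [← bt_image hb]
  rw [integral_image_eq_integral_abs_deriv_smul measurableSet_Ioo
      (f' := fun θ => b / Real.cos θ ^ 2) ?_ (bt_injOn hb)]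
  · rw [ellipticK, intervalIntegral.integral_of_le (by positivity),
      MeasureTheory.integral_Ioc_eq_integral_Ioo]
    apply MeasureTheory.setIntegral_congr_fun measurableSet_Ioo
    intro θ hθ
    obtain ⟨h1, h2⟩ := hθ
    have hc : 0 < Real.cos θ := Real.cos_pos_of_mem_Ioo ⟨by linarith [Real.pi_pos], h2⟩
    have hA : 0 < 1 - k^2 * Real.sin θ^2 := by
      nlinarith [Real.sin_sq_le_one θ, sq_nonneg k]
    have htan : Real.tan θ = Real.sin θ / Real.cos θ := Real.tan_eq_sin_div_cos θ
    have hsc : Real.sin θ ^ 2 + Real.cos θ ^ 2 = 1 := Real.sin_sq_add_cos_sq θ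
    have key : ((b * Real.tan θ)^2+1)*((b * Real.tan θ)^2+(1-k^2))
        = (Real.sqrt (1 - k^2 * Real.sin θ^2) * b / Real.cos θ ^ 2)^2 := by
      have hr : (Real.sqrt (1 - k^2 * Real.sin θ^2) * b / Real.cos θ ^ 2)^2
          = (1 - k^2 * Real.sin θ^2) * (1-k^2) / Real.cos θ^4 := by
        rw [div_pow, mul_pow, Real.sq_sqrt hA.le, hb2]; ring
      rw [hr, htan]
      simp only [mul_pow]
      simp only [hb2]
      field_simp
      linear_combination ((1-k^2) * Real.cos θ^4 * (1 + (1-k^2)*Real.sin θ^2 + Real.cos θ^2) + (-k^2*Real.sin θ^2 + 2*k^2*Real.sin θ^2*Real.cos θ^4 - k^4*Real.sin θ^2*Real.cos θ^4 + Real.sin θ^2 - Real.sin θ^2*Real.cos θ^4 + k^2*Real.cos θ^4 + k^2*Real.cos θ^6 + Real.cos θ^2 - Real.cos θ^6 + 1 - Real.cos θ^4)) * hsc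
    have hsqrt : Real.sqrt (((b * Real.tan θ)^2+1)*((b * Real.tan θ)^2+(1-k^2)))
        = Real.sqrt (1 - k^2 * Real.sin θ^2) * b / Real.cos θ ^ 2 := by
      rw [key, Real.sqrt_sq (by positivity)]
    simp only [smul_eq_mul]
    rw [hsqrt, abs_of_pos (by positivity : (0:ℝ) < b / Real.cos θ ^ 2)]
    have hsA : 0 < Real.sqrt (1 - k^2 * Real.sin θ^2) := Real.sqrt_pos.mpr hA
    field_simp
  · intro θ hθ
    obtain ⟨h1, h2⟩ := hθ
    have hc : Real.cos θ ≠ 0 :=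
      (Real.cos_pos_of_mem_Ioo ⟨by linarith [Real.pi_pos], h2⟩).ne'
    have := (Real.hasDerivAt_tan hc).const_mul b
    simpa [div_eq_mul_inv] using this.hasDerivWithinAt


lemma gauss_image {b : ℝ} (hb : 0 < b) :
    (fun x : ℝ => (x - b / x) / 2) '' (Ioi 0) = univ := by
  apply eq_univ_of_forall
  intro u
  have hs : (0:ℝ) < u^2 + b := by positivity
  set x := u + Real.sqrt (u^2 + b) with hxdef
  have hsq : Real.sqrt (u^2+b) ^ 2 = u^2 + b := Real.sq_sqrt hs.le
  have hgt : |u| < Real.sqrt (u^2+b) := by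
    rw [← Real.sqrt_sq_eq_abs]
    exact Real.sqrt_lt_sqrt (sq_nonneg u) (by linarith)
  have hx : 0 < x := by
    have := neg_abs_le u
    simp only [hxdef]
    linarith
  refine ⟨x, hx, ?_⟩
  have hxx : x^2 - 2*u*x - b = 0 := by
    simp only [hxdef]
    nlinarith [hsq]
  field_simp
  nlinarith [hxx]

lemma gauss_injOn {b : ℝ} (hb : 0 < b) :
    InjOn (fun x : ℝ => (x - b / x) / 2) (Ioi 0) := by
  have : StrictMonoOn (fun x : ℝ => (x - b / x) / 2) (Ioi 0) := by
    intro x hx y hy hlt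
    simp only [mem_Ioi] at hx hy
    have : b / y < b / x := div_lt_div_of_pos_left hb hx hlt
    simp only
    linarith
  exact this.injOn

lemma gauss_step {b : ℝ} (hb : 0 < b) :
    (∫ u : ℝ, 1 / Real.sqrt ((u^2+((1+b)/2)^2)*(u^2+b)))
      = ∫ x in Ioi (0:ℝ), 2 * (1 / Real.sqrt ((x^2+1)*(x^2+b^2))) := by
  have himg := gauss_image hb
  rw [← setIntegral_univ, ← himg]
  rw [integral_image_eq_integral_abs_deriv_smul measurableSet_Ioi
      (f' := fun x => (1 + b / x^2) / 2) ?_ (gauss_injOn hb)]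
  · apply MeasureTheory.setIntegral_congr_fun measurableSet_Ioi
    intro x hx
    simp only [mem_Ioi] at hx
    have hP : (0:ℝ) < (x^2+1)*(x^2+b^2) := by positivity
    set R := Real.sqrt ((x^2+1)*(x^2+b^2)) with hRdef
    have hR : 0 < R := Real.sqrt_pos.mpr hP
    have hR2 : R^2 = (x^2+1)*(x^2+b^2) := Real.sq_sqrt hP.le
    have key : ((((x - b/x)/2)^2+((1+b)/2)^2)*(((x - b/x)/2)^2+b))
        = (R * (x^2+b)/(4*x^2))^2 := by
      have hr : (R * (x^2+b)/(4*x^2))^2 = ((x^2+1)*(x^2+b^2))*(x^2+b)^2/(4*x^2)^2 := by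
        rw [div_pow, mul_pow, hR2]
      rw [hr]
      field_simp
      ring
    have hsqrt : Real.sqrt ((((x - b/x)/2)^2+((1+b)/2)^2)*(((x - b/x)/2)^2+b))
        = R * (x^2+b)/(4*x^2) := by
      rw [key, Real.sqrt_sq (by positivity)]
    simp only [smul_eq_mul]
    rw [hsqrt, abs_of_pos (by positivity : (0:ℝ) < (1 + b/x^2)/2)]
    field_simp
    rw [hRdef, show ((x:ℝ)^2+1)*(x^2+b^2) = (1+x^2)*(x^2+b^2) by ring,
      Real.sqrt_mul (by positivity : (0:ℝ) ≤ 1+x^2)]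
    ring
  · intro x hx
    simp only [mem_Ioi] at hx
    have h1 : HasDerivAt (fun x : ℝ => (x - b / x) / 2) ((1 - b * (-(x^2)⁻¹)) / 2) x := by
      have hinv : HasDerivAt (fun x : ℝ => x⁻¹) (-(x^2)⁻¹) x := hasDerivAt_inv hx.ne'
      have : HasDerivAt (fun y : ℝ => y - b * y⁻¹) (1 - b * (-(x^2)⁻¹)) x := by
        exact (hasDerivAt_id' x).sub (hinv.const_mul b)
      simpa [div_eq_mul_inv] using this.div_const 2
    have heq : (1 - b * (-(x^2)⁻¹)) / 2 = (1 + b / x^2) / 2 := by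
      field_simp
      ring
    rw [heq] at h1
    exact h1.hasDerivWithinAt


lemma kernel_cont {A c : ℝ} (hA : 0 < A) (hc : 0 < c) :
    Continuous (fun u : ℝ => 1 / Real.sqrt ((u^2+A^2)*(u^2+c))) := by
  apply Continuous.div continuous_const
  · apply Continuous.sqrt
    continuity
  · intro u
    apply ne_of_gt
    apply Real.sqrt_pos.mpr
    positivity

lemma integrable_kernel {A c : ℝ} (hA : 0 < A) (hc : 0 < c) :
    Integrable (fun u : ℝ => 1 / Real.sqrt ((u^2+A^2)*(u^2+c))) := by
  set m : ℝ := min (min (A^2) c) 1 with hmdef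
  have hm : 0 < m := by positivity
  have hm1 : m ≤ 1 := min_le_right _ _
  have hmA : m ≤ A^2 := le_trans (min_le_left _ _) (min_le_left _ _)
  have hmc : m ≤ c := le_trans (min_le_left _ _) (min_le_right _ _)
  apply Integrable.mono' (integrable_inv_one_add_sq.const_mul m⁻¹)
    ((kernel_cont hA hc).aestronglyMeasurable)
  filter_upwards with u
  have hD : (0:ℝ) < (u^2+A^2)*(u^2+c) := by positivity
  have hlow : m * (1+u^2) ≤ Real.sqrt ((u^2+A^2)*(u^2+c)) := by
    rw [show m * (1+u^2) = Real.sqrt ((m*(1+u^2))^2) from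
      (Real.sqrt_sq (by positivity)).symm]
    apply Real.sqrt_le_sqrt
    have h1 : m*(1+u^2) ≤ u^2+A^2 := by nlinarith [sq_nonneg u]
    have h2 : m*(1+u^2) ≤ u^2+c := by nlinarith [sq_nonneg u]
    have := mul_le_mul h1 h2 (by positivity) (by positivity)
    nlinarith [this]
  rw [Real.norm_eq_abs, abs_of_nonneg (by positivity)]
  rw [one_div]
  rw [show m⁻¹ * (1+u^2)⁻¹ = (m * (1+u^2))⁻¹ by rw [mul_inv]]
  exact inv_anti₀ (by positivity) hlow

lemma integral_inv_sq_add {A : ℝ} (hA : 0 < A) :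
    (∫ u : ℝ, (u^2+A^2)⁻¹) = π / A := by
  have h : ∀ u : ℝ, (u^2+A^2)⁻¹ = (A⁻¹*A⁻¹) * (1+(A⁻¹*u)^2)⁻¹ := by
    intro u; field_simp; ring
  simp_rw [h]
  rw [integral_const_mul]
  rw [Measure.integral_comp_mul_left (fun y => (1+y^2)⁻¹) A⁻¹]
  rw [integral_univ_inv_one_add_sq]
  rw [inv_inv, abs_of_pos hA, smul_eq_mul]
  field_simp

lemma integrable_inv_sq_add {A : ℝ} (hA : 0 < A) :
    Integrable (fun u : ℝ => (u^2+A^2)⁻¹) := by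
  set m : ℝ := min (A^2) 1 with hmdef
  have hm : 0 < m := by positivity
  have hm1 : m ≤ 1 := min_le_right _ _
  have hmA : m ≤ A^2 := min_le_left _ _
  have hcont : Continuous (fun u : ℝ => (u^2+A^2)⁻¹) := by
    apply Continuous.inv₀ (by continuity)
    intro u; positivity
  apply Integrable.mono' (integrable_inv_one_add_sq.const_mul m⁻¹)
    hcont.aestronglyMeasurable
  filter_upwards with u
  rw [Real.norm_eq_abs, abs_of_nonneg (by positivity),
    show m⁻¹ * (1+u^2)⁻¹ = (m * (1+u^2))⁻¹ by rw [mul_inv]]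
  apply inv_anti₀ (by positivity)
  nlinarith [sq_nonneg u]

lemma ellipticK_gt {k : ℝ} (hk0 : 0 < k) (hk1 : k < 1) :
    π / (1 + Real.sqrt (1 - k^2)) < ellipticK k := by
  have hk2 : (0:ℝ) < 1 - k^2 := by nlinarith
  set b := Real.sqrt (1 - k^2) with hbdef
  have hb : 0 < b := Real.sqrt_pos.mpr hk2
  have hb2 : b^2 = 1 - k^2 := Real.sq_sqrt hk2.le
  have hblt : b < 1 := by
    have h1 : b^2 < 1 := by rw [hb2]; nlinarith
    nlinarith [hb, h1]
  set A : ℝ := (1+b)/2 with hAdef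
  have hA : 0 < A := by positivity
  have hbA : b < A^2 := by
    rw [hAdef]; nlinarith [sq_nonneg (1-b)]
  -- the three integrals
  have hK : ellipticK k = ∫ x in Ioi (0:ℝ), 1 / Real.sqrt ((x^2+1)*(x^2+b^2)) := by
    rw [ellipticK_eq_integral_Ioi hk0 hk1, hb2]
  have hgauss : (∫ u : ℝ, 1 / Real.sqrt ((u^2+A^2)*(u^2+b))) = 2 * ellipticK k := by
    rw [hK, gauss_step hb, ← integral_const_mul]
  -- strict comparison
  have hgint : Integrable (fun u : ℝ => 1 / Real.sqrt ((u^2+A^2)*(u^2+b))) :=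
    integrable_kernel hA hb
  have hhint : Integrable (fun u : ℝ => (u^2+A^2)⁻¹) := integrable_inv_sq_add hA
  have hlt : ∀ u : ℝ, (u^2+A^2)⁻¹ < 1 / Real.sqrt ((u^2+A^2)*(u^2+b)) := by
    intro u
    have h1 : Real.sqrt ((u^2+A^2)*(u^2+b)) < u^2+A^2 := by
      have : (u^2+A^2)*(u^2+b) < (u^2+A^2)^2 := by nlinarith [sq_nonneg u]
      calc Real.sqrt ((u^2+A^2)*(u^2+b)) < Real.sqrt ((u^2+A^2)^2) :=
            Real.sqrt_lt_sqrt (by positivity) this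
        _ = u^2+A^2 := Real.sqrt_sq (by positivity)
    have h2 : 0 < Real.sqrt ((u^2+A^2)*(u^2+b)) := Real.sqrt_pos.mpr (by positivity)
    rw [one_div, inv_lt_inv₀ (by positivity) h2]
    exact h1
  have hpos : 0 < ∫ u : ℝ, (1 / Real.sqrt ((u^2+A^2)*(u^2+b)) - (u^2+A^2)⁻¹) := by
    rw [integral_pos_iff_support_of_nonneg]
    · rw [show Function.support (fun u : ℝ => 1 / Real.sqrt ((u^2+A^2)*(u^2+b)) - (u^2+A^2)⁻¹)
          = univ from eq_univ_of_forall (fun u => sub_ne_zero.mpr (hlt u).ne')]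
      simp
    · intro u
      exact sub_nonneg.mpr (hlt u).le
    · exact hgint.sub hhint
  have hsub : (∫ u : ℝ, (1 / Real.sqrt ((u^2+A^2)*(u^2+b)) - (u^2+A^2)⁻¹))
      = (∫ u : ℝ, 1 / Real.sqrt ((u^2+A^2)*(u^2+b))) - ∫ u : ℝ, (u^2+A^2)⁻¹ :=
    integral_sub hgint hhint
  have hfinal : π / A < 2 * ellipticK k := by
    rw [← hgauss, ← integral_inv_sq_add hA]
    linarith [hpos, hsub]
  rw [hAdef] at hfinal
  rw [show π / (1 + b) = (π / ((1+b)/2)) / 2 by field_simp]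
  linarith [hfinal]

lemma tanh_sqrt (u : ℝ) : Real.sqrt (1 - (1/Real.cosh u)^2) = |Real.tanh u| := by
  have hc := Real.cosh_pos u
  have h : 1 - (1/Real.cosh u)^2 = Real.tanh u ^ 2 := by
    rw [Real.tanh_eq_sinh_div_cosh, div_pow]
    field_simp
    linear_combination Real.cosh_sq_sub_sinh_sq u
  rw [h, Real.sqrt_sq_eq_abs]

lemma tanh_identity (t : ℝ) : (1 + Real.tanh (t/2)) * (1 + Real.exp (-t)) = 2 := by
  set E := Real.exp (t/2) with hEdef
  have hE0 : 0 < E := Real.exp_pos _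
  have h1 : Real.exp (-t) = E⁻¹ * E⁻¹ := by
    rw [hEdef, ← Real.exp_neg, ← Real.exp_add]
    ring_nf
  have h2 : Real.sinh (t/2) = (E - E⁻¹)/2 := by rw [Real.sinh_eq, Real.exp_neg]
  have h3 : Real.cosh (t/2) = (E + E⁻¹)/2 := by rw [Real.cosh_eq, Real.exp_neg]
  have h4 : (0:ℝ) < E + E⁻¹ := by positivity
  rw [Real.tanh_eq_sinh_div_cosh, h1, h2, h3]
  field_simp
  ring

/-- positivity and exponential decay of `kernelPhi`. -/
theorem kernelPhi_pos_and_exp_decay :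
    (∀ t : ℝ, t ≠ 0 → 0 < kernelPhi t) ∧
    (∃ C c : ℝ, 0 < C ∧ 0 < c ∧
      ∀ t : ℝ, 1 ≤ |t| → kernelPhi t ≤ C * Real.exp (-c * |t|)) := by
  have pi_pos := Real.pi_pos
  constructor
  · intro t ht
    have hu : t/2 ≠ 0 := div_ne_zero ht two_ne_zero
    have hc1 : 1 < Real.cosh (t/2) := Real.one_lt_cosh.mpr hu
    have hcpos : 0 < Real.cosh (t/2) := Real.cosh_pos _
    set k := 1/Real.cosh (t/2) with hkdef
    have hk0 : 0 < k := by positivity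
    have hk1 : k < 1 := by rw [hkdef]; exact (div_lt_one hcpos).mpr hc1
    have hk2 : k^2 < 1 := by nlinarith
    have hK := ellipticK_lower hk2
    have hKpos : 0 < ellipticK k := lt_of_lt_of_le (by positivity) hK
    rcases ht.lt_or_gt with htneg | htpos
    · unfold kernelPhi
      rw [if_neg (not_le.mpr htneg), sub_zero]
      rw [← hkdef]
      apply div_pos (mul_pos (by positivity) hKpos) (by positivity)
    · unfold kernelPhi
      rw [if_pos htpos.le, ← hkdef, sub_pos]
      have htanhpos : 0 < Real.tanh (t/2) := by
        rw [Real.tanh_eq_sinh_div_cosh]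
        exact div_pos (Real.sinh_pos_iff.mpr (by linarith)) hcpos
      have hKgt : π / (1 + Real.tanh (t/2)) < ellipticK k := by
        have h := ellipticK_gt hk0 hk1
        rwa [hkdef, tanh_sqrt (t/2), abs_of_pos htanhpos, ← hkdef] at h
      have hid := tanh_identity t
      have h1b : 0 < 1 + Real.tanh (t/2) := by linarith
      have hExp : 0 < 1 + Real.exp (-t) := by positivity
      rw [lt_div_iff₀ hExp, one_mul]
      have h2 : 1 + Real.exp (-t) = 2/(1 + Real.tanh (t/2)) := by
        rw [eq_div_iff h1b.ne']
        linear_combination hid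
      rw [h2]
      calc 2/(1 + Real.tanh (t/2)) = (2/π) * (π/(1 + Real.tanh (t/2))) := by
            field_simp
        _ < (2/π) * ellipticK k := by
            exact mul_lt_mul_of_pos_left hKgt (by positivity)
  · refine ⟨10, 1, by norm_num, one_pos, fun t ht => ?_⟩
    have ht0 : t ≠ 0 := by
      intro h; rw [h] at ht; simp at ht; linarith
    have hu : t/2 ≠ 0 := div_ne_zero ht0 two_ne_zero
    have hc1 : 1 < Real.cosh (t/2) := Real.one_lt_cosh.mpr hu
    have hcpos : 0 < Real.cosh (t/2) := Real.cosh_pos _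
    set k := 1/Real.cosh (t/2) with hkdef
    have hk0 : 0 < k := by positivity
    have hk1 : k < 1 := by rw [hkdef]; exact (div_lt_one hcpos).mpr hc1
    have hk2 : k^2 < 1 := by nlinarith
    set b := Real.sqrt (1 - k^2) with hbdef
    have hb2 : b^2 = 1 - k^2 := Real.sq_sqrt (by nlinarith)
    have hbnn : 0 ≤ b := Real.sqrt_nonneg _
    have hb1 : b ≤ 1 := by nlinarith [hb2, hk0]
    -- lower bound on b
    have hcsq : Real.cosh (t/2)^2 = (Real.exp t + 2 + Real.exp (-t))/4 := by
      have h2m := Real.cosh_two_mul (t/2)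
      rw [show 2*(t/2) = t by ring] at h2m
      have hct : Real.cosh t = (Real.exp t + Real.exp (-t))/2 := Real.cosh_eq t
      rw [hct, Real.sinh_sq] at h2m
      linarith
    have hsum : Real.exp 1 ≤ Real.exp t + Real.exp (-t) := by
      rcases le_abs.mp ht with h | h
      · have := Real.exp_le_exp.mpr h
        have := (Real.exp_pos (-t)).le
        linarith
      · have := Real.exp_le_exp.mpr h
        have := (Real.exp_pos t).le
        linarith
    have he : (2.7:ℝ) ≤ Real.exp 1 := by
      have := Real.exp_one_gt_d9
      linarith
    have hcsq_ge : (100:ℝ)/99 ≤ Real.cosh (t/2)^2 := by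
      rw [hcsq]; linarith
    have hb2ge : (1:ℝ)/100 ≤ b^2 := by
      rw [hb2, hkdef]
      have h9 : (1:ℝ)/Real.cosh (t/2)^2 ≤ 99/100 := by
        rw [div_le_iff₀ (by positivity)]
        linarith
      rw [div_pow, one_pow]
      linarith
    have hbge : (1:ℝ)/10 ≤ b := by nlinarith
    have hbpos : (0:ℝ) < b := by linarith
    have hKub : ellipticK k ≤ (π/2) * (1/b) := by
      have := ellipticK_upper hk2
      rwa [← hbdef] at this
    have hP : (2/π) * ellipticK k ≤ 1/b := by
      have h := mul_le_mul_of_nonneg_left hKub (by positivity : (0:ℝ) ≤ 2/π)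
      calc (2/π) * ellipticK k ≤ (2/π) * ((π/2) * (1/b)) := h
        _ = 1/b := by field_simp
    have hPnn : 0 ≤ (2/π) * ellipticK k := by
      have := ellipticK_lower hk2
      have : 0 < ellipticK k := lt_of_lt_of_le (by positivity) this
      positivity
    set X := Real.exp (-t) with hXdef
    have hX : 0 < X := Real.exp_pos _
    rcases le_abs.mp ht with hpos | hneg
    · -- t ≥ 1
      have habs : |t| = t := abs_of_pos (by linarith)
      have htanhpos : 0 < Real.tanh (t/2) := by
        rw [Real.tanh_eq_sinh_div_cosh]
        exact div_pos (Real.sinh_pos_iff.mpr (by linarith)) hcpos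
      have hbtanh : b = Real.tanh (t/2) := by
        rw [hbdef, hkdef, tanh_sqrt (t/2), abs_of_pos htanhpos]
      have hid : (1 + b) * (1 + X) = 2 := by
        rw [hbtanh, hXdef]; exact tanh_identity t
      unfold kernelPhi
      rw [if_pos (by linarith : (0:ℝ) ≤ t), ← hkdef, ← hXdef, habs]
      have hstep : (2/π) * ellipticK k / (1+X) ≤ (1/b)/(1+X) :=
        div_le_div₀ (by positivity) hP (by positivity) le_rfl
      have e1 : (1/b)/(1+X) = (1+b)/(2*b) := by
        have h1X : (0:ℝ) < 1 + X := by positivity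
        field_simp
        linear_combination (-1) * hid
      have h1mb : (1-b)*(1+X) = 2*X := by linear_combination - hid
      have h1mb2 : 1 - b ≤ 2*X := by nlinarith
      have hkey : (1/b)/(1+X) - 1 ≤ 10*X := by
        rw [e1, sub_le_iff_le_add, div_le_iff₀ (by linarith [hbpos] : (0:ℝ) < 2*b)]
        have h5 : 2*X ≤ 20*(X*b) := by
          have h5a : X*(1/10) ≤ X*b := mul_le_mul_of_nonneg_left hbge hX.le
          have h5b : (0:ℝ) ≤ 20 := by norm_num
          have := mul_le_mul_of_nonneg_left h5a h5b
          linarith [this]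
        have h6 : (10*X+1)*(2*b) = 20*(X*b) + 2*b := by ring
        rw [h6]
        linarith [h1mb2, h5]
      rw [show (-1:ℝ)*t = -t by ring, ← hXdef]
      linarith [hstep, hkey]
    · -- t ≤ -1
      have htneg : t < 0 := by linarith
      have habs : |t| = -t := abs_of_neg htneg
      unfold kernelPhi
      rw [if_neg (not_le.mpr htneg), sub_zero, ← hkdef, ← hXdef, habs]
      have h1b10 : 1/b ≤ 10 := by rw [div_le_iff₀ hbpos]; linarith
      have hstep : (2/π) * ellipticK k / (1+X) ≤ 10/X :=
        div_le_div₀ (by norm_num) (le_trans hP h1b10) hX (by linarith)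
      rw [show (-1:ℝ)*-t = t by ring]
      have h10X : (10:ℝ)/X = 10 * Real.exp t := by
        rw [hXdef, Real.exp_neg]
        field_simp
      calc (2/π) * ellipticK k / (1+X) ≤ 10/X := hstep
        _ = 10 * Real.exp t := h10X

end Aux
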